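/- arXiv:1507.08413 — 3 statements merged into one kernel-verified Lean document; each statement's English description precedes it below -/
import Mathlib

section
/- Moreau's identity: for any proper lower semicontinuous convex function f on a real Hilbert space H, any λ > 0, and any x ∈ H, one has x = prox_{λf}(x) + λ · prox_{(1/λ)f*}(x/λ), where f* is the Fenchel conjugate of f. -/
open scoped BigOperators
noncomputable section

variable {H : Type*} [NormedAddCommGroup H] [InnerProductSpace ℝ H]

/-- `p` is a proximity point of the extended-real-valued `f` at `x`:
it minimizes `y ↦ f y + (1/2)‖x - y‖²`. -/
def EProx (f : H → EReal) (x p : H) : Prop :=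
  ∀ y : H, f p + (((1:ℝ)/2 * ‖x - p‖^2 : ℝ) : EReal) ≤
    f y + (((1:ℝ)/2 * ‖x - y‖^2 : ℝ) : EReal)

/-- Fenchel conjugate of an extended-real-valued function. -/
def EConj (f : H → EReal) (x : H) : EReal :=
  ⨆ u : H, ((inner ℝ x u : ℝ) : EReal) - f u

/-- Convex subdifferential of an extended-real-valued function. -/
def ESubdiff (f : H → EReal) (x : H) : Set H :=
  {g : H | ∀ y : H, f x + ((inner ℝ g (y - x) : ℝ) : EReal) ≤ f y}

/-- `f` is proper: never `⊥` and somewhere finite. -/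
def EProper (f : H → EReal) : Prop :=
  (∀ x, f x ≠ ⊥) ∧ ∃ x, f x ≠ ⊤

/-- Convexity of an extended-real-valued function. -/
def EConvexOn (f : H → EReal) : Prop :=
  ∀ x y : H, ∀ a b : ℝ, 0 ≤ a → 0 ≤ b → a + b = 1 →
    f (a • x + b • y) ≤ ((a : EReal)) * f x + ((b : EReal)) * f y


-- auxiliary: upper bound on EConj from pointwise bounds
lemma econj_le_of_forall {f : H → EReal} (hbot : ∀ z, f z ≠ ⊥) (y : H) (c : ℝ)
    (h : ∀ z : H, ∀ fz : ℝ, f z = (fz : EReal) → (inner ℝ y z : ℝ) - fz ≤ c) :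
    EConj f y ≤ (c : EReal) := by
  refine iSup_le fun z => ?_
  rcases eq_or_ne (f z) ⊤ with hz | hz
  · rw [hz, sub_eq_add_neg, EReal.neg_top, EReal.add_bot]
    exact bot_le
  · have hz' : f z = ((f z).toReal : EReal) := (EReal.coe_toReal hz (hbot z)).symm
    rw [hz', ← EReal.coe_sub, EReal.coe_le_coe_iff]
    exact h z _ hz'

lemma quad_aux (a p v : H) :
    (inner ℝ a p : ℝ) + 1/2 * ‖p‖^2 ≤ (inner ℝ v p : ℝ) + 1/2 * ‖a + p - v‖^2 := by
  have h1 : a + p - v = (a - v) + p := by abel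
  have h2 : ‖(a - v) + p‖^2 = ‖a - v‖^2 + 2 * (inner ℝ (a - v) p : ℝ) + ‖p‖^2 :=
    norm_add_sq_real _ _
  have h3 : (inner ℝ (a - v) p : ℝ) = (inner ℝ a p : ℝ) - (inner ℝ v p : ℝ) := inner_sub_left _ _ _
  rw [h1, h2, h3]
  nlinarith [sq_nonneg ‖a - v‖]


/-- Moreau's identity: `x = prox_{λf}(x) + λ · prox_{(1/λ)f*}(x/λ)`. -/
theorem moreau_identity {H : Type*} [NormedAddCommGroup H] [InnerProductSpace ℝ H]
    [CompleteSpace H] (f : H → EReal) (hf : EProper f) (hlsc : LowerSemicontinuous f)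
    (hcv : EConvexOn f) (lam : ℝ) (hlam : 0 < lam) (x p q : H)
    (hp : EProx (fun y => ((lam : ℝ) : EReal) * f y) x p)
    (hq : EProx (fun y => ((lam⁻¹ : ℝ) : EReal) * EConj f y) (lam⁻¹ • x) q) :
    x = p + lam • q := by
  obtain ⟨hbot, y₀, hy₀⟩ := hf
  have hlam' : (0:ℝ) < lam⁻¹ := inv_pos.2 hlam
  have hr₀ : f y₀ = ((f y₀).toReal : EReal) := (EReal.coe_toReal hy₀ (hbot y₀)).symm
  -- f p is finite
  have hfp_top : f p ≠ ⊤ := by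
    intro h
    have h2 := hp y₀
    beta_reduce at h2
    rw [h, hr₀, EReal.coe_mul_top_of_pos (by exact_mod_cast hlam), EReal.top_add_coe,
      ← EReal.coe_mul, ← EReal.coe_add] at h2
    exact EReal.coe_ne_top _ (top_le_iff.1 h2)
  set fp : ℝ := (f p).toReal with hfp_def
  have hfp : f p = (fp : EReal) := (EReal.coe_toReal hfp_top (hbot p)).symm
  -- subgradient inequality
  have key : ∀ z : H, ∀ fz : ℝ, f z = (fz : EReal) →
      (inner ℝ (x - p) (z - p) : ℝ) ≤ lam * (fz - fp) := by
    intro z fz hz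
    have step : ∀ t : ℝ, 0 < t → t ≤ 1 →
        (inner ℝ (x - p) (z - p) : ℝ) ≤ lam * (fz - fp) + t / 2 * ‖z - p‖^2 := by
      intro t ht ht1
      set w := t • z + (1 - t) • p with hw
      have hconv := hcv z p t (1 - t) ht.le (by linarith) (by ring)
      have hfw_le : f w ≤ (((t * fz + (1 - t) * fp : ℝ)) : EReal) := by
        calc f w ≤ ((t : ℝ) : EReal) * f z + (((1 - t : ℝ)) : EReal) * f p := hconv
          _ = _ := by
            rw [hz, hfp, ← EReal.coe_mul, ← EReal.coe_mul, ← EReal.coe_add]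
      have hfw_top : f w ≠ ⊤ := (hfw_le.trans_lt (EReal.coe_lt_top _)).ne
      have hfw : f w = (((f w).toReal : ℝ) : EReal) := (EReal.coe_toReal hfw_top (hbot w)).symm
      set fw : ℝ := (f w).toReal with hfw_def
      have hfw_le' : fw ≤ t * fz + (1 - t) * fp := by
        rw [hfw] at hfw_le; exact_mod_cast hfw_le
      have hpw := hp w
      beta_reduce at hpw
      rw [hfp, hfw, ← EReal.coe_mul, ← EReal.coe_mul, ← EReal.coe_add, ← EReal.coe_add,
        EReal.coe_le_coe_iff] at hpw
      -- expand ‖x - w‖²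
      have hxw : x - w = (x - p) - t • (z - p) := by
        rw [hw]; module
      have hnorm : ‖x - w‖^2 =
          ‖x - p‖^2 - 2 * (t * (inner ℝ (x - p) (z - p) : ℝ)) + t^2 * ‖z - p‖^2 := by
        rw [hxw, norm_sub_sq_real, real_inner_smul_right, norm_smul, Real.norm_eq_abs,
          abs_of_pos ht, mul_pow]
      rw [hnorm] at hpw
      have h4 : lam * t * (fz - fp) + t^2 / 2 * ‖z - p‖^2 ≥ t * (inner ℝ (x - p) (z - p) : ℝ) := by
        nlinarith [hpw, hfw_le', hlam]
      nlinarith [h4, ht]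
    by_contra hcon
    push_neg at hcon
    set B : ℝ := ‖z - p‖^2 with hB
    have hB0 : 0 ≤ B := sq_nonneg _
    set ε : ℝ := (inner ℝ (x - p) (z - p) : ℝ) - lam * (fz - fp) with hε
    have hε0 : 0 < ε := by simp only [hε]; linarith
    set t : ℝ := min 1 (ε / (B + 1)) with ht_def
    have ht : 0 < t := lt_min one_pos (div_pos hε0 (by linarith))
    have ht1 : t ≤ 1 := min_le_left _ _
    have ht2 : t ≤ ε / (B + 1) := min_le_right _ _
    have ht3 : t * (B + 1) ≤ ε := by
      rw [← div_mul_cancel₀ ε (by linarith : B + 1 ≠ 0)]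
      exact mul_le_mul_of_nonneg_right ht2 (by linarith)
    have := step t ht ht1
    nlinarith [this, ht, hB0, ht3]
  -- the candidate prox point for the conjugate
  set u : H := lam⁻¹ • (x - p) with hu_def
  set cu : ℝ := (inner ℝ u p : ℝ) - fp with hcu_def
  have conj_ge : ∀ y : H, (((inner ℝ y p : ℝ) - fp : ℝ) : EReal) ≤ EConj f y := by
    intro y
    have h1 : ((inner ℝ y p : ℝ) : EReal) - f p = (((inner ℝ y p : ℝ) - fp : ℝ) : EReal) := by
      rw [hfp, ← EReal.coe_sub]
    rw [← h1]
    exact le_iSup (fun z => ((inner ℝ y z : ℝ) : EReal) - f z) p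
  have conj_u : EConj f u = (cu : EReal) := by
    refine le_antisymm ?_ (conj_ge u)
    refine econj_le_of_forall hbot u cu ?_
    intro z fz hz
    have hk := key z fz hz
    have h1 : (inner ℝ u z : ℝ) - (inner ℝ u p : ℝ) = lam⁻¹ * (inner ℝ (x - p) (z - p) : ℝ) := by
      rw [hu_def, real_inner_smul_left, real_inner_smul_left, ← mul_sub, ← inner_sub_right]
    have h2 : lam⁻¹ * lam = 1 := inv_mul_cancel₀ hlam.ne'
    have h3 : lam⁻¹ * (inner ℝ (x - p) (z - p) : ℝ) ≤ fz - fp := by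
      calc lam⁻¹ * (inner ℝ (x - p) (z - p) : ℝ) ≤ lam⁻¹ * (lam * (fz - fp)) :=
            mul_le_mul_of_nonneg_left hk hlam'.le
        _ = fz - fp := by rw [← mul_assoc, h2, one_mul]
    simp only [hcu_def]
    linarith [h1, h3]
  -- u is also a prox point: real-valued minimality
  have umin : ∀ y : H,
      ((lam⁻¹ * cu + 1/2 * ‖lam⁻¹ • x - u‖^2 : ℝ) : EReal) ≤
        ((lam⁻¹ : ℝ) : EReal) * EConj f y + (((1:ℝ)/2 * ‖lam⁻¹ • x - y‖^2 : ℝ) : EReal) := by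
    intro y
    have hwu : lam⁻¹ • x - u = lam⁻¹ • p := by rw [hu_def]; module
    have hwy : lam⁻¹ • x - y = lam⁻¹ • (x - lam • y) := by
      rw [smul_sub, smul_smul, inv_mul_cancel₀ hlam.ne', one_smul]
    have hnp : ‖lam⁻¹ • p‖^2 = lam⁻¹^2 * ‖p‖^2 := by
      rw [norm_smul, Real.norm_eq_abs, abs_of_pos hlam', mul_pow]
    have hny : ‖lam⁻¹ • (x - lam • y)‖^2 = lam⁻¹^2 * ‖x - lam • y‖^2 := by
      rw [norm_smul, Real.norm_eq_abs, abs_of_pos hlam', mul_pow]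
    have hquad := quad_aux (x - p) p (lam • y)
    have hxy : (x - p) + p - lam • y = x - lam • y := by abel
    rw [hxy] at hquad
    have hup : (inner ℝ u p : ℝ) = lam⁻¹ * (inner ℝ (x - p) p : ℝ) := real_inner_smul_left _ _ _
    have hvp : (inner ℝ (lam • y) p : ℝ) = lam * (inner ℝ y p : ℝ) := real_inner_smul_left _ _ _
    have hreal : lam⁻¹ * cu + 1/2 * ‖lam⁻¹ • x - u‖^2 ≤
        lam⁻¹ * ((inner ℝ y p : ℝ) - fp) + 1/2 * ‖lam⁻¹ • x - y‖^2 := by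
      rw [hwu, hwy, hnp, hny, hcu_def, hup]
      rw [hvp] at hquad
      have h5 := mul_le_mul_of_nonneg_left hquad (by positivity : (0:ℝ) ≤ lam⁻¹^2)
      have h6 : lam⁻¹^2 * (lam * (inner ℝ y p : ℝ)) = lam⁻¹ * (inner ℝ y p : ℝ) := by
        field_simp [hlam.ne']
      nlinarith [h5, h6]
    calc ((lam⁻¹ * cu + 1/2 * ‖lam⁻¹ • x - u‖^2 : ℝ) : EReal)
        ≤ ((lam⁻¹ * ((inner ℝ y p : ℝ) - fp) + 1/2 * ‖lam⁻¹ • x - y‖^2 : ℝ) : EReal) := by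
          exact_mod_cast hreal
      _ = ((lam⁻¹ : ℝ) : EReal) * (((inner ℝ y p : ℝ) - fp : ℝ) : EReal) +
            (((1:ℝ)/2 * ‖lam⁻¹ • x - y‖^2 : ℝ) : EReal) := by
          rw [← EReal.coe_mul, ← EReal.coe_add]
      _ ≤ _ :=
          add_le_add_left
            (mul_le_mul_of_nonneg_left (conj_ge y) (EReal.coe_nonneg.2 hlam'.le)) _
  -- EConj f q is finite
  have hq_bot : EConj f q ≠ ⊥ := fun h => EReal.coe_ne_bot _ (le_bot_iff.1 (h ▸ conj_ge q))
  have hq_u := hq u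
  beta_reduce at hq_u
  have hq_top : EConj f q ≠ ⊤ := by
    intro h
    rw [h, conj_u, EReal.coe_mul_top_of_pos (by exact_mod_cast hlam'), EReal.top_add_coe,
      ← EReal.coe_mul, ← EReal.coe_add] at hq_u
    exact EReal.coe_ne_top _ (top_le_iff.1 hq_u)
  have hcq : EConj f q = (((EConj f q).toReal : ℝ) : EReal) := (EReal.coe_toReal hq_top hq_bot).symm
  set cq : ℝ := (EConj f q).toReal with hcq_def
  -- real minimality inequalities both ways
  have Hq : lam⁻¹ * cq + 1/2 * ‖lam⁻¹ • x - q‖^2 ≤ lam⁻¹ * cu + 1/2 * ‖lam⁻¹ • x - u‖^2 := by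
    rw [hcq, conj_u, ← EReal.coe_mul, ← EReal.coe_mul, ← EReal.coe_add, ← EReal.coe_add,
      EReal.coe_le_coe_iff] at hq_u
    linarith [hq_u]
  have Hu : lam⁻¹ * cu + 1/2 * ‖lam⁻¹ • x - u‖^2 ≤ lam⁻¹ * cq + 1/2 * ‖lam⁻¹ • x - q‖^2 := by
    have := umin q
    rw [hcq, ← EReal.coe_mul, ← EReal.coe_add, EReal.coe_le_coe_iff] at this
    linarith [this]
  -- midpoint
  set m : H := ((1:ℝ)/2) • q + ((1:ℝ)/2) • u with hm_def
  have conj_m : EConj f m ≤ ((cq/2 + cu/2 : ℝ) : EReal) := by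
    refine econj_le_of_forall hbot m _ ?_
    intro z fz hz
    have hqz : (inner ℝ q z : ℝ) - fz ≤ cq := by
      have h1 : ((inner ℝ q z : ℝ) : EReal) - f z ≤ EConj f q :=
        le_iSup (fun w => ((inner ℝ q w : ℝ) : EReal) - f w) z
      rw [hz, hcq, ← EReal.coe_sub, EReal.coe_le_coe_iff] at h1
      exact h1
    have huz : (inner ℝ u z : ℝ) - fz ≤ cu := by
      have h1 : ((inner ℝ u z : ℝ) : EReal) - f z ≤ EConj f u :=
        le_iSup (fun w => ((inner ℝ u w : ℝ) : EReal) - f w) z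
      rw [hz, conj_u, ← EReal.coe_sub, EReal.coe_le_coe_iff] at h1
      exact h1
    have hmz : (inner ℝ m z : ℝ) = (1/2) * (inner ℝ q z : ℝ) + (1/2) * (inner ℝ u z : ℝ) := by
      rw [hm_def, inner_add_left, real_inner_smul_left, real_inner_smul_left]
    linarith [hqz, huz, hmz.le, hmz.ge]
  have Hm : lam⁻¹ * cu + 1/2 * ‖lam⁻¹ • x - u‖^2 ≤
      lam⁻¹ * (cq/2 + cu/2) + 1/2 * ‖lam⁻¹ • x - m‖^2 := by
    have h1 := umin m
    have h2 : ((lam⁻¹ : ℝ) : EReal) * EConj f m + (((1:ℝ)/2 * ‖lam⁻¹ • x - m‖^2 : ℝ) : EReal) ≤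
        ((lam⁻¹ * (cq/2 + cu/2) + 1/2 * ‖lam⁻¹ • x - m‖^2 : ℝ) : EReal) := by
      rw [EReal.coe_add, EReal.coe_mul lam⁻¹]
      exact add_le_add_left
        (mul_le_mul_of_nonneg_left conj_m (EReal.coe_nonneg.2 hlam'.le)) _
    have h3 := h1.trans h2
    rw [EReal.coe_le_coe_iff] at h3
    linarith [h3]
  -- parallelogram and conclusion q = u
  have hwm : lam⁻¹ • x - m = ((1:ℝ)/2) • ((lam⁻¹ • x - q) + (lam⁻¹ • x - u)) := by
    rw [hm_def]; module
  have hpar : ‖lam⁻¹ • x - m‖^2 =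
      (1/4) * (‖lam⁻¹ • x - q‖^2 + 2 * (inner ℝ (lam⁻¹ • x - q) (lam⁻¹ • x - u) : ℝ)
        + ‖lam⁻¹ • x - u‖^2) := by
    rw [hwm, norm_smul, Real.norm_eq_abs, mul_pow, norm_add_sq_real]
    norm_num
  have hdiff : ‖q - u‖^2 = ‖lam⁻¹ • x - q‖^2 - 2 * (inner ℝ (lam⁻¹ • x - q) (lam⁻¹ • x - u) : ℝ)
      + ‖lam⁻¹ • x - u‖^2 := by
    have h1 : q - u = (lam⁻¹ • x - u) - (lam⁻¹ • x - q) := by abel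
    rw [h1, norm_sub_sq_real, real_inner_comm]
    ring
  have hqu : q = u := by
    have h0 : ‖q - u‖^2 ≤ 0 := by linarith [Hq, Hu, Hm, hpar, hdiff]
    have h1 : ‖q - u‖^2 = 0 := le_antisymm h0 (sq_nonneg _)
    have hn : ‖q - u‖ = 0 := by
      exact pow_eq_zero_iff two_ne_zero |>.1 h1
    exact sub_eq_zero.1 (norm_eq_zero.1 hn)
  rw [hqu, hu_def, smul_smul, mul_inv_cancel₀ hlam.ne', one_smul]
  abel
end
end

section
/- Diagonal preconditioner bound: Let K be a real m × n matrix and α ∈ [0, 2]. Define diagonal matrices T = diag(τ₁, …, τ_n) and Σ = diag(σ₁, …, σ_m) with τ_j = 1/Σ_{i=1}^m |K_{ij}|^{2−α} and σ_i = 1/Σ_{j=1}^n |K_{ij}|^α (assuming all these sums are positive). Then the operator norm satisfies ‖Σ^{1/2} K T^{1/2}‖² ≤ 1. -/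
open scoped BigOperators

private lemma sq_rpow_aux (y p : ℝ) (hy : 0 ≤ y) : (y ^ p) ^ 2 = y ^ (p * 2) := by
  have h : (y ^ p) ^ (2 : ℕ) = (y ^ p) ^ ((2 : ℕ) : ℝ) := (Real.rpow_natCast _ 2).symm
  rw [h, ← Real.rpow_mul hy]
  norm_num

/-- Diagonal preconditioner bound (Pock–Chambolle): with
`τ_j = 1/Σᵢ |K_{ij}|^{2−α}` and `σ_i = 1/Σⱼ |K_{ij}|^α`, the matrix
`Σ^{1/2} K T^{1/2}` has Euclidean operator norm at most `1`, i.e.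
`‖Σ^{1/2} K T^{1/2} x‖² ≤ ‖x‖²` for every `x`. -/
theorem diag_preconditioner_bound {m n : ℕ} (K : Matrix (Fin m) (Fin n) ℝ)
    (α : ℝ) (hα0 : 0 ≤ α) (hα2 : α ≤ 2)
    (hcol : ∀ j, 0 < ∑ i, |K i j| ^ (2 - α))
    (hrow : ∀ i, 0 < ∑ j, |K i j| ^ α) :
    ∀ x : Fin n → ℝ,
      ∑ i, ((Matrix.of fun i j =>
          Real.sqrt (1 / ∑ j', |K i j'| ^ α) * K i j *
            Real.sqrt (1 / ∑ i', |K i' j| ^ (2 - α))).mulVec x i) ^ 2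
        ≤ ∑ j, (x j) ^ 2 := by
  intro x
  have key : ∀ i, ((Matrix.of fun i j =>
          Real.sqrt (1 / ∑ j', |K i j'| ^ α) * K i j *
            Real.sqrt (1 / ∑ i', |K i' j| ^ (2 - α))).mulVec x i) ^ 2
      ≤ ∑ j, |K i j| ^ (2 - α) * ((1 / ∑ i', |K i' j| ^ (2 - α)) * (x j) ^ 2) := by
    intro i
    have hri : 0 < ∑ j, |K i j| ^ α := hrow i
    set r : ℝ := ∑ j, |K i j| ^ α with hrdef
    set f : Fin n → ℝ := fun j => Real.sign (K i j) * |K i j| ^ (α / 2) with hf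
    set g : Fin n → ℝ := fun j =>
      |K i j| ^ ((2 - α) / 2) * (Real.sqrt (1 / ∑ i', |K i' j| ^ (2 - α)) * x j) with hg
    have hfg : ∀ j, f j * g j
        = K i j * (Real.sqrt (1 / ∑ i', |K i' j| ^ (2 - α)) * x j) := by
      intro j
      rcases eq_or_ne (K i j) 0 with h0 | h0
      · simp [hf, hg, h0]
      · have habs : 0 < |K i j| := abs_pos.mpr h0
        have hpow : |K i j| ^ (α / 2) * |K i j| ^ ((2 - α) / 2) = |K i j| := by
          rw [← Real.rpow_add habs, show α / 2 + (2 - α) / 2 = 1 by ring, Real.rpow_one]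
        have hs : Real.sign (K i j) * |K i j| = K i j := by
          rcases lt_trichotomy (K i j) 0 with h | h | h
          · rw [Real.sign_of_neg h, abs_of_neg h]; ring
          · exact absurd h h0
          · rw [Real.sign_of_pos h, abs_of_pos h]; ring
        calc f j * g j
            = Real.sign (K i j) * ((|K i j| ^ (α / 2) * |K i j| ^ ((2 - α) / 2)) *
              (Real.sqrt (1 / ∑ i', |K i' j| ^ (2 - α)) * x j)) := by
              simp only [hf, hg]; ring
          _ = K i j * (Real.sqrt (1 / ∑ i', |K i' j| ^ (2 - α)) * x j) := by
              rw [hpow, ← mul_assoc, hs]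
    have hmv : (Matrix.of fun i j =>
          Real.sqrt (1 / ∑ j', |K i j'| ^ α) * K i j *
            Real.sqrt (1 / ∑ i', |K i' j| ^ (2 - α))).mulVec x i
        = Real.sqrt (1 / r) * ∑ j, f j * g j := by
      rw [Finset.mul_sum]
      simp only [Matrix.mulVec, dotProduct, Matrix.of_apply]
      refine Finset.sum_congr rfl fun j _ => ?_
      rw [hfg j]
      ring
    have hCS : (∑ j, f j * g j) ^ 2 ≤ (∑ j, f j ^ 2) * ∑ j, g j ^ 2 :=
      Finset.sum_mul_sq_le_sq_mul_sq _ _ _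
    have hf2 : ∑ j, f j ^ 2 ≤ r := by
      rw [hrdef]
      refine Finset.sum_le_sum fun j _ => ?_
      have h1 : f j ^ 2 = (Real.sign (K i j)) ^ 2 * (|K i j| ^ (α / 2)) ^ 2 := by
        simp only [hf]; ring
      have h2 : (|K i j| ^ (α / 2)) ^ 2 = |K i j| ^ α := by
        rw [sq_rpow_aux _ _ (abs_nonneg _)]
        norm_num
      have h3 : (Real.sign (K i j)) ^ 2 ≤ 1 := by
        rcases lt_trichotomy (K i j) 0 with h | h | h
        · rw [Real.sign_of_neg h]; norm_num
        · rw [h, Real.sign_zero]; norm_num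
        · rw [Real.sign_of_pos h]; norm_num
      have h4 : 0 ≤ |K i j| ^ α := Real.rpow_nonneg (abs_nonneg _) _
      calc f j ^ 2 = (Real.sign (K i j)) ^ 2 * |K i j| ^ α := by rw [h1, h2]
        _ ≤ 1 * |K i j| ^ α := mul_le_mul_of_nonneg_right h3 h4
        _ = |K i j| ^ α := one_mul _
    have hg2 : ∀ j, g j ^ 2 = |K i j| ^ (2 - α) * ((1 / ∑ i', |K i' j| ^ (2 - α)) * (x j) ^ 2) := by
      intro j
      have hcj : (0:ℝ) ≤ 1 / ∑ i', |K i' j| ^ (2 - α) := by positivity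
      have h2 : (|K i j| ^ ((2 - α) / 2)) ^ 2 = |K i j| ^ (2 - α) := by
        rw [sq_rpow_aux _ _ (abs_nonneg _)]
        norm_num
      have h3 : (Real.sqrt (1 / ∑ i', |K i' j| ^ (2 - α))) ^ 2
          = 1 / ∑ i', |K i' j| ^ (2 - α) := Real.sq_sqrt hcj
      simp only [hg]
      rw [mul_pow, mul_pow, h2, h3]
    have hgnn : 0 ≤ ∑ j, g j ^ 2 := Finset.sum_nonneg fun j _ => sq_nonneg _
    have hsq : (Real.sqrt (1 / r)) ^ 2 = 1 / r := Real.sq_sqrt (by positivity)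
    have hbound : ((Matrix.of fun i j =>
          Real.sqrt (1 / ∑ j', |K i j'| ^ α) * K i j *
            Real.sqrt (1 / ∑ i', |K i' j| ^ (2 - α))).mulVec x i) ^ 2
        ≤ ∑ j, g j ^ 2 := by
      rw [hmv, mul_pow, hsq]
      have h5 : (∑ j, f j * g j) ^ 2 ≤ r * ∑ j, g j ^ 2 :=
        hCS.trans (mul_le_mul_of_nonneg_right hf2 hgnn)
      have h6 : 1 / r * (∑ j, f j * g j) ^ 2 ≤ 1 / r * (r * ∑ j, g j ^ 2) :=
        mul_le_mul_of_nonneg_left h5 (by positivity)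
      have h7 : 1 / r * (r * ∑ j, g j ^ 2) = ∑ j, g j ^ 2 := by
        field_simp
      linarith
    calc _ ≤ ∑ j, g j ^ 2 := hbound
      _ = ∑ j, |K i j| ^ (2 - α) * ((1 / ∑ i', |K i' j| ^ (2 - α)) * (x j) ^ 2) :=
        Finset.sum_congr rfl fun j _ => hg2 j
  calc ∑ i, ((Matrix.of fun i j =>
          Real.sqrt (1 / ∑ j', |K i j'| ^ α) * K i j *
            Real.sqrt (1 / ∑ i', |K i' j| ^ (2 - α))).mulVec x i) ^ 2
      ≤ ∑ i, ∑ j, |K i j| ^ (2 - α) * ((1 / ∑ i', |K i' j| ^ (2 - α)) * (x j) ^ 2) :=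
        Finset.sum_le_sum fun i _ => key i
    _ = ∑ j, ∑ i, |K i j| ^ (2 - α) * ((1 / ∑ i', |K i' j| ^ (2 - α)) * (x j) ^ 2) :=
        Finset.sum_comm
    _ = ∑ j, (x j) ^ 2 := by
        refine Finset.sum_congr rfl fun j _ => ?_
        rw [← Finset.sum_mul]
        have hcj : (0:ℝ) < ∑ i', |K i' j| ^ (2 - α) := hcol j
        field_simp
end

section
/- Splitting diagonal preconditioner bound: Let K₁, …, K_l be real matrices with K_k ∈ ℝ^{m_k×n}, and α ∈ [0,2]. Define T = diag(τ) with τ_j = 1/(Σ_{k=1}^l Σ_{i=1}^{m_k} |K_k(i,j)|^{2−α}) and Σ_k = diag(σ^k) with σ^k_i = 1/(Σ_{j=1}^n |K_k(i,j)|^α) (assuming these sums positive). Let K̃ be the stacked matrix (K₁; …; K_l) and Σ̃ = diag(Σ₁, …, Σ_l). Then ‖Σ̃^{1/2} K̃ T^{1/2}‖² ≤ 1. -/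
open scoped BigOperators

lemma split_abs_rpow {a : ℝ} (ha : 0 ≤ a) {α : ℝ} (hα0 : 0 ≤ α) (hα2 : α ≤ 2) :
    a ^ (α / 2) * a ^ ((2 - α) / 2) = a := by
  rcases eq_or_lt_of_le ha with h | h
  · rcases eq_or_lt_of_le hα0 with h0 | h0
    · rw [← h, ← h0]
      norm_num
    · rw [← h, Real.zero_rpow (by positivity), zero_mul]
  · rw [← Real.rpow_add h, show α / 2 + (2 - α) / 2 = 1 by ring, Real.rpow_one]

lemma rpow_half_sq {a : ℝ} (ha : 0 ≤ a) (p : ℝ) :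
    (a ^ (p / 2)) ^ 2 = a ^ p := by
  rw [← Real.rpow_natCast (a ^ (p / 2)) 2, ← Real.rpow_mul ha]
  norm_num

/-- Splitting diagonal preconditioner bound: with
`τ_j = 1/(Σ_k Σ_i |K_k(i,j)|^{2−α})` and `σ^k_i = 1/(Σ_j |K_k(i,j)|^α)`,
the stacked matrix `K̃ = (K₁; …; K_l)` satisfies
`‖Σ̃^{1/2} K̃ T^{1/2} x‖² ≤ ‖x‖²` for every `x`, i.e. `‖Σ̃^{1/2} K̃ T^{1/2}‖² ≤ 1`. -/
theorem splitting_diag_preconditioner_bound {l n : ℕ} {m : Fin l → ℕ}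
    (K : ∀ k : Fin l, Matrix (Fin (m k)) (Fin n) ℝ)
    (α : ℝ) (hα0 : 0 ≤ α) (hα2 : α ≤ 2)
    (hcol : ∀ j, 0 < ∑ k, ∑ i, |K k i j| ^ (2 - α))
    (hrow : ∀ k, ∀ i, 0 < ∑ j, |K k i j| ^ α) :
    ∀ x : Fin n → ℝ,
      ∑ s : (k : Fin l) × Fin (m k),
        ((Matrix.of fun (s : (k : Fin l) × Fin (m k)) j =>
            Real.sqrt (1 / ∑ j', |K s.1 s.2 j'| ^ α) * K s.1 s.2 j *
              Real.sqrt (1 / ∑ k, ∑ i', |K k i' j| ^ (2 - α))).mulVec x s) ^ 2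
        ≤ ∑ j, (x j) ^ 2 := by
  intro x
  simp only [Matrix.mulVec, dotProduct, Matrix.of_apply]
  set T : Fin n → ℝ := fun j => 1 / ∑ k, ∑ i', |K k i' j| ^ (2 - α) with hT
  have hTpos : ∀ j, 0 < T j := fun j => div_pos one_pos (hcol j)
  have key : ∀ s : (k : Fin l) × Fin (m k),
      (∑ j, Real.sqrt (1 / ∑ j', |K s.1 s.2 j'| ^ α) * K s.1 s.2 j *
          Real.sqrt (T j) * x j) ^ 2
        ≤ ∑ j, |K s.1 s.2 j| ^ (2 - α) * (T j * x j ^ 2) := by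
    intro s
    set σs : ℝ := 1 / ∑ j', |K s.1 s.2 j'| ^ α with hσ
    have hσpos : 0 < σs := div_pos one_pos (hrow s.1 s.2)
    have step1 : (∑ j, Real.sqrt σs * K s.1 s.2 j * Real.sqrt (T j) * x j)
        = Real.sqrt σs * ∑ j, K s.1 s.2 j * Real.sqrt (T j) * x j := by
      rw [Finset.mul_sum]
      exact Finset.sum_congr rfl fun j _ => by ring
    rw [step1, mul_pow, Real.sq_sqrt hσpos.le]
    set f : Fin n → ℝ := fun j => |K s.1 s.2 j| ^ (α / 2) with hf
    set g : Fin n → ℝ := fun j => |K s.1 s.2 j| ^ ((2 - α) / 2) * (Real.sqrt (T j) * |x j|)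
      with hg
    have habs : ∀ j, |K s.1 s.2 j * Real.sqrt (T j) * x j| = f j * g j := by
      intro j
      rw [abs_mul, abs_mul, abs_of_nonneg (Real.sqrt_nonneg _), hf, hg]
      rw [show |K s.1 s.2 j| ^ (α / 2) * (|K s.1 s.2 j| ^ ((2 - α) / 2) *
            (Real.sqrt (T j) * |x j|))
          = (|K s.1 s.2 j| ^ (α / 2) * |K s.1 s.2 j| ^ ((2 - α) / 2)) *
            Real.sqrt (T j) * |x j| by ring,
        split_abs_rpow (abs_nonneg _) hα0 hα2]
    have hcs : (∑ j, K s.1 s.2 j * Real.sqrt (T j) * x j) ^ 2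
        ≤ (∑ j, f j ^ 2) * ∑ j, g j ^ 2 := by
      calc (∑ j, K s.1 s.2 j * Real.sqrt (T j) * x j) ^ 2
          = |∑ j, K s.1 s.2 j * Real.sqrt (T j) * x j| ^ 2 := (sq_abs _).symm
        _ ≤ (∑ j, |K s.1 s.2 j * Real.sqrt (T j) * x j|) ^ 2 := by
            apply pow_le_pow_left₀ (abs_nonneg _)
            exact Finset.abs_sum_le_sum_abs _ _
        _ = (∑ j, f j * g j) ^ 2 := by rw [Finset.sum_congr rfl fun j _ => habs j]
        _ ≤ (∑ j, f j ^ 2) * ∑ j, g j ^ 2 := Finset.sum_mul_sq_le_sq_mul_sq _ _ _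
    have hf2 : ∀ j, f j ^ 2 = |K s.1 s.2 j| ^ α := fun j =>
      rpow_half_sq (abs_nonneg _) α
    have hg2 : ∀ j, g j ^ 2 = |K s.1 s.2 j| ^ (2 - α) * (T j * x j ^ 2) := by
      intro j
      rw [hg, mul_pow, mul_pow, rpow_half_sq (abs_nonneg _), Real.sq_sqrt (hTpos j).le,
        sq_abs]
    calc σs * (∑ j, K s.1 s.2 j * Real.sqrt (T j) * x j) ^ 2
        ≤ σs * ((∑ j, f j ^ 2) * ∑ j, g j ^ 2) := by
          exact mul_le_mul_of_nonneg_left hcs hσpos.le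
      _ = (σs * ∑ j, |K s.1 s.2 j| ^ α) * ∑ j, g j ^ 2 := by
          simp only [hf2]; ring
      _ = ∑ j, g j ^ 2 := by
          rw [hσ, one_div, inv_mul_cancel₀ (hrow s.1 s.2).ne', one_mul]
      _ = ∑ j, |K s.1 s.2 j| ^ (2 - α) * (T j * x j ^ 2) :=
          Finset.sum_congr rfl fun j _ => hg2 j
  calc ∑ s : (k : Fin l) × Fin (m k),
        (∑ j, Real.sqrt (1 / ∑ j', |K s.1 s.2 j'| ^ α) * K s.1 s.2 j *
          Real.sqrt (T j) * x j) ^ 2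
      ≤ ∑ s : (k : Fin l) × Fin (m k), ∑ j, |K s.1 s.2 j| ^ (2 - α) * (T j * x j ^ 2) :=
        Finset.sum_le_sum fun s _ => key s
    _ = ∑ j, (∑ s : (k : Fin l) × Fin (m k), |K s.1 s.2 j| ^ (2 - α)) * (T j * x j ^ 2) := by
        rw [Finset.sum_comm]
        exact Finset.sum_congr rfl fun j _ => (Finset.sum_mul _ _ _).symm
    _ = ∑ j, x j ^ 2 := by
        refine Finset.sum_congr rfl fun j _ => ?_
        have hsig : ∑ s : (k : Fin l) × Fin (m k), |K s.1 s.2 j| ^ (2 - α)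
            = ∑ k, ∑ i, |K k i j| ^ (2 - α) := by
          rw [← Finset.univ_sigma_univ, Finset.sum_sigma]
        rw [hsig]
        simp only [hT, one_div]
        rw [← mul_assoc, mul_inv_cancel₀ (hcol j).ne', one_mul]
end
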